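/- For every y > 0: (i) ∫₀^y x·(Λφ(x))² dx = 2·log(1+y²) − 2y²/(1+y²); (ii) y·Λφ(y)·(A T₁)(y) = 2·log(1+y²) − 2y²/(1+y²), i.e. A T₁ = (1/(y·Λφ))·∫₀^y x·(Λφ(x))² dx, where (A T₁)(y) = −T₁'(y) + (Z(y)/y)·T₁(y). -/

import Mathlib

open MeasureTheory

noncomputable section

/-- `Z(y) = (1-y²)/(1+y²)`. -/
def Zf (y : ℝ) : ℝ := (1 - y ^ 2) / (1 + y ^ 2)

/-- The resonance `Λφ(y) = 2y/(1+y²)`. -/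
def Lphi (y : ℝ) : ℝ := 2 * y / (1 + y ^ 2)

/-- The first order factor `A f = -f' + (Z/y) f`. -/
def Aop (f : ℝ → ℝ) (y : ℝ) : ℝ := -deriv f y + Zf y / y * f y

/-- The explicit profile `T₁`. -/
def T1 (y : ℝ) : ℝ :=
  ((1 - y ^ 4) * Real.log (1 + y ^ 2) + 2 * y ^ 4 - y ^ 2
      - 4 * y ^ 2 * ∫ x in (1 : ℝ)..y, Real.log (1 + x ^ 2) / x)
    / (2 * y * (1 + y ^ 2))

/-- The explicit formula `A T₁ = (1/(y Λφ)) ∫₀^y x Λφ(x)² dx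
    = (2 log(1+y²) - 2y²/(1+y²)) / (y Λφ(y))`. -/
theorem AT1_formula :
    ∀ y > (0 : ℝ),
      (∫ x in (0 : ℝ)..y, x * (Lphi x) ^ 2)
        = 2 * Real.log (1 + y ^ 2) - 2 * y ^ 2 / (1 + y ^ 2) ∧
      y * Lphi y * Aop T1 y
        = 2 * Real.log (1 + y ^ 2) - 2 * y ^ 2 / (1 + y ^ 2) := by
  intro y hy
  have hy0 : y ≠ 0 := hy.ne'
  have hpos : (0 : ℝ) < 1 + y ^ 2 := by positivity
  constructor
  · -- part (i)
    have h1c : Continuous fun x : ℝ => (1 : ℝ) + x ^ 2 := by continuity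
    have hc : Continuous fun x : ℝ => x * (Lphi x) ^ 2 := by
      simp only [Lphi]
      exact continuous_id.mul
        (((continuous_const.mul continuous_id).div h1c (fun x => by positivity)).pow 2)
    have key : ∀ x : ℝ, HasDerivAt
        (fun t : ℝ => 2 * Real.log (1 + t ^ 2) - 2 * t ^ 2 / (1 + t ^ 2))
        (x * (Lphi x) ^ 2) x := by
      intro x
      have hp : (0 : ℝ) < 1 + x ^ 2 := by positivity
      have h1 : HasDerivAt (fun t : ℝ => 1 + t ^ 2) (2 * x) x := by
        simpa using (hasDerivAt_pow 2 x).const_add 1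
      have hlog : HasDerivAt (fun t : ℝ => 2 * Real.log (1 + t ^ 2))
          (2 * (2 * x / (1 + x ^ 2))) x := (h1.log hp.ne').const_mul 2
      have h2 : HasDerivAt (fun t : ℝ => 2 * t ^ 2) (2 * (2 * x)) x := by
        simpa using (hasDerivAt_pow 2 x).const_mul 2
      have hq : HasDerivAt (fun t : ℝ => 2 * t ^ 2 / (1 + t ^ 2))
          ((2 * (2 * x) * (1 + x ^ 2) - 2 * x ^ 2 * (2 * x)) / (1 + x ^ 2) ^ 2) x :=
        h2.div h1 hp.ne'
      have : HasDerivAt (fun t : ℝ => 2 * Real.log (1 + t ^ 2) - 2 * t ^ 2 / (1 + t ^ 2))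
          (2 * (2 * x / (1 + x ^ 2)) - (2 * (2 * x) * (1 + x ^ 2) - 2 * x ^ 2 * (2 * x)) / (1 + x ^ 2) ^ 2) x :=
        hlog.sub hq
      convert this using 1
      simp only [Lphi]
      field_simp
      ring
    rw [intervalIntegral.integral_eq_sub_of_hasDerivAt (fun x _ => key x)
      (hc.intervalIntegrable 0 y)]
    norm_num
  · -- part (ii)
    -- derivative of the inner integral
    have hIcont : ContinuousOn (fun x : ℝ => Real.log (1 + x ^ 2) / x) {(0:ℝ)}ᶜ := by
      apply ContinuousOn.div
      · exact (Continuous.log (by continuity) (fun x => by positivity)).continuousOn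
      · exact continuousOn_id
      · intro x hx; exact hx
    have hsub : Set.uIcc (1:ℝ) y ⊆ {(0:ℝ)}ᶜ := by
      intro x hx
      have h1 : min 1 y ≤ x := hx.1
      have : (0:ℝ) < min 1 y := lt_min one_pos hy
      simp only [Set.mem_compl_iff, Set.mem_singleton_iff]
      exact (lt_of_lt_of_le this h1).ne'
    have hInt : IntervalIntegrable (fun x : ℝ => Real.log (1 + x ^ 2) / x)
        volume 1 y := (hIcont.mono hsub).intervalIntegrable
    have hI : HasDerivAt (fun u : ℝ => ∫ x in (1:ℝ)..u, Real.log (1 + x ^ 2) / x)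
        (Real.log (1 + y ^ 2) / y) y := by
      apply intervalIntegral.integral_hasDerivAt_right hInt
      · exact hIcont.stronglyMeasurableAtFilter isOpen_compl_singleton y hy0
      · exact (hIcont.continuousAt (isOpen_compl_singleton.mem_nhds hy0))
    -- derivative of the numerator
    have h1 : HasDerivAt (fun t : ℝ => 1 + t ^ 2) (2 * y) y := by
      simpa using (hasDerivAt_pow 2 y).const_add 1
    have hlog : HasDerivAt (fun t : ℝ => Real.log (1 + t ^ 2)) (2 * y / (1 + y ^ 2)) y :=
      h1.log hpos.ne'
    have h4 : HasDerivAt (fun t : ℝ => 1 - t ^ 4) (-(4 * y ^ 3)) y := by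
      simpa using (hasDerivAt_pow 4 y).const_sub 1
    have hA : HasDerivAt (fun t : ℝ => (1 - t ^ 4) * Real.log (1 + t ^ 2))
        (-(4 * y ^ 3) * Real.log (1 + y ^ 2) + (1 - y ^ 4) * (2 * y / (1 + y ^ 2))) y :=
      h4.mul hlog
    have hB : HasDerivAt (fun t : ℝ => 2 * t ^ 4) (2 * (4 * y ^ 3)) y := by
      simpa using (hasDerivAt_pow 4 y).const_mul 2
    have hC : HasDerivAt (fun t : ℝ => t ^ 2) (2 * y) y := by
      simpa using hasDerivAt_pow 2 y
    have hD4 : HasDerivAt (fun t : ℝ => 4 * t ^ 2) (4 * (2 * y)) y := by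
      simpa using (hasDerivAt_pow 2 y).const_mul 4
    have hE : HasDerivAt
        (fun t : ℝ => 4 * t ^ 2 * ∫ x in (1:ℝ)..t, Real.log (1 + x ^ 2) / x)
        (4 * (2 * y) * (∫ x in (1:ℝ)..y, Real.log (1 + x ^ 2) / x)
          + 4 * y ^ 2 * (Real.log (1 + y ^ 2) / y)) y := hD4.mul hI
    have hN : HasDerivAt
        (fun t : ℝ => (1 - t ^ 4) * Real.log (1 + t ^ 2) + 2 * t ^ 4 - t ^ 2
          - 4 * t ^ 2 * ∫ x in (1:ℝ)..t, Real.log (1 + x ^ 2) / x)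
        ((-(4 * y ^ 3) * Real.log (1 + y ^ 2) + (1 - y ^ 4) * (2 * y / (1 + y ^ 2))
            + 2 * (4 * y ^ 3) - 2 * y)
          - (4 * (2 * y) * (∫ x in (1:ℝ)..y, Real.log (1 + x ^ 2) / x)
            + 4 * y ^ 2 * (Real.log (1 + y ^ 2) / y))) y :=
      ((hA.add hB).sub hC).sub hE
    -- derivative of the denominator
    have hDen : HasDerivAt (fun t : ℝ => 2 * t * (1 + t ^ 2))
        (2 * (1 + y ^ 2) + 2 * y * (2 * y)) y := by
      have : HasDerivAt (fun t : ℝ => 2 * t * (1 + t ^ 2)) (2 * 1 * (1 + y ^ 2) + 2 * y * (2 * y)) y :=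
        ((hasDerivAt_id y).const_mul 2).mul h1
      simpa using this
    have hDne : 2 * y * (1 + y ^ 2) ≠ 0 := by positivity
    have hT1 : HasDerivAt T1
        ((((-(4 * y ^ 3) * Real.log (1 + y ^ 2) + (1 - y ^ 4) * (2 * y / (1 + y ^ 2))
            + 2 * (4 * y ^ 3) - 2 * y)
          - (4 * (2 * y) * (∫ x in (1:ℝ)..y, Real.log (1 + x ^ 2) / x)
            + 4 * y ^ 2 * (Real.log (1 + y ^ 2) / y))) * (2 * y * (1 + y ^ 2))
          - ((1 - y ^ 4) * Real.log (1 + y ^ 2) + 2 * y ^ 4 - y ^ 2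
              - 4 * y ^ 2 * ∫ x in (1:ℝ)..y, Real.log (1 + x ^ 2) / x)
            * (2 * (1 + y ^ 2) + 2 * y * (2 * y))) / (2 * y * (1 + y ^ 2)) ^ 2) y := by
      unfold T1
      exact hN.div hDen hDne
    rw [Aop, hT1.deriv]
    simp only [T1, Zf, Lphi]
    set l := Real.log (1 + y ^ 2) with hl
    set i := (∫ x in (1:ℝ)..y, Real.log (1 + x ^ 2) / x) with hi
    field_simp
    ring

end
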